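/- For every bounded continuous section f of π, every y ∈ Y and all 0 < t < s, one has iD⁺f(y, t) ≤ iD⁻f(y, s). -/

import Mathlib

open Metric Set Filter Topology MeasureTheory

/-- `F(t,y,z) = max_j f_j(z) + d(f(z), π⁻¹(y))² / (2t)`. -/
noncomputable def hlF {κ : ℕ} (Y : Set (EuclideanSpace ℝ (Fin κ)))
    (π : EuclideanSpace ℝ (Fin κ) → Y) (f : Y → EuclideanSpace ℝ (Fin κ))
    (t : ℝ) (y z : Y) : ℝ :=
  (⨆ j, f z j) + (Metric.infDist (f z) (π ⁻¹' {y}))^2 / (2*t)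

/-- The intrinsic Hopf–Lax semigroup `iQ_t f(y) = inf_{z ∈ Y} F(t,y,z)`. -/
noncomputable def iQ {κ : ℕ} (Y : Set (EuclideanSpace ℝ (Fin κ)))
    (π : EuclideanSpace ℝ (Fin κ) → Y) (f : Y → EuclideanSpace ℝ (Fin κ))
    (t : ℝ) (y : Y) : ℝ :=
  ⨅ z : Y, hlF Y π f t y z

/-- A minimizing sequence for `iQ_t f(y)`. -/
def IsMinSeq {κ : ℕ} (Y : Set (EuclideanSpace ℝ (Fin κ)))
    (π : EuclideanSpace ℝ (Fin κ) → Y) (f : Y → EuclideanSpace ℝ (Fin κ))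
    (t : ℝ) (y : Y) (u : ℕ → Y) : Prop :=
  Filter.Tendsto (fun n => hlF Y π f t y (u n)) Filter.atTop (nhds (iQ Y π f t y))

/-- `iD⁺f(y,t)`. -/
noncomputable def iDp {κ : ℕ} (Y : Set (EuclideanSpace ℝ (Fin κ)))
    (π : EuclideanSpace ℝ (Fin κ) → Y) (f : Y → EuclideanSpace ℝ (Fin κ))
    (y : Y) (t : ℝ) : ℝ :=
  sSup { a : ℝ | ∃ u : ℕ → Y, IsMinSeq Y π f t y u ∧
    a = Filter.limsup (fun n => Metric.infDist (f (u n)) (π ⁻¹' {y})) Filter.atTop }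

/-- `iD⁻f(y,t)`. -/
noncomputable def iDm {κ : ℕ} (Y : Set (EuclideanSpace ℝ (Fin κ)))
    (π : EuclideanSpace ℝ (Fin κ) → Y) (f : Y → EuclideanSpace ℝ (Fin κ))
    (y : Y) (t : ℝ) : ℝ :=
  sInf { a : ℝ | ∃ u : ℕ → Y, IsMinSeq Y π f t y u ∧
    a = Filter.liminf (fun n => Metric.infDist (f (u n)) (π ⁻¹' {y})) Filter.atTop }

lemma aux_coord_le_norm {κ : ℕ} (x : EuclideanSpace ℝ (Fin κ)) (j : Fin κ) : |x j| ≤ ‖x‖ := by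
  have h := EuclideanSpace.norm_eq x
  have h1 : ‖x j‖ ^ 2 ≤ ∑ i, ‖x i‖ ^ 2 :=
    Finset.single_le_sum (f := fun i => ‖x i‖ ^ 2) (fun i _ => sq_nonneg _) (Finset.mem_univ j)
  have h2 : Real.sqrt (‖x j‖ ^ 2) ≤ Real.sqrt (∑ i, ‖x i‖ ^ 2) := Real.sqrt_le_sqrt h1
  rw [Real.sqrt_sq (norm_nonneg _)] at h2
  rw [h]
  exact h2

theorem stmt_3 (κ : ℕ) (hκ : 1 ≤ κ)
    (Y : Set (EuclideanSpace ℝ (Fin κ))) (hY : Y.Nonempty) (hYb : Bornology.IsBounded Y)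
    (π : EuclideanSpace ℝ (Fin κ) → Y) (hπc : Continuous π) (hπo : IsOpenMap π)
    (hπs : Function.Surjective π)
    (f : Y → EuclideanSpace ℝ (Fin κ)) (hfc : Continuous f)
    (hfb : Bornology.IsBounded (Set.range f)) (hsec : ∀ y : Y, π (f y) = y)

    (y : Y) (t s : ℝ) (ht : 0 < t) (hts : t < s) :
    iDp Y π f y t ≤ iDm Y π f y s := by
  have hYne : Nonempty Y := hY.to_subtype
  have j0 : Fin κ := ⟨0, hκ⟩
  have hs0 : 0 < s := ht.trans hts
  have hfyS : f y ∈ π ⁻¹' {y} := by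
    simp only [Set.mem_preimage, Set.mem_singleton_iff, hsec y]
  set D : Y → ℝ := fun z => infDist (f z) (π ⁻¹' {y}) with hDdef
  obtain ⟨R, hR0, hR⟩ : ∃ R, 0 ≤ R ∧ ∀ z : Y, ‖f z‖ ≤ R := by
    obtain ⟨R, hR⟩ := hfb.subset_closedBall 0
    refine ⟨max R 0, le_max_right _ _, fun z => ?_⟩
    have := hR (mem_range_self z)
    simp only [Metric.mem_closedBall, dist_zero_right] at this
    exact this.trans (le_max_left _ _)
  have hD0 : ∀ z, 0 ≤ D z := fun z => infDist_nonneg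
  have hDle : ∀ z, D z ≤ 2 * R := by
    intro z
    have h1 : D z ≤ dist (f z) (f y) := infDist_le_dist_of_mem hfyS
    have h2 : dist (f z) (f y) ≤ ‖f z‖ + ‖f y‖ := by
      rw [dist_eq_norm]; exact norm_sub_le _ _
    have := hR z; have := hR y
    linarith
  have hg_ge : ∀ z : Y, -R ≤ ⨆ j, f z j := by
    intro z
    have h1 : -R ≤ f z j0 := by
      have := aux_coord_le_norm (f z) j0
      have := hR z
      have := neg_abs_le (f z j0)
      linarith
    exact h1.trans (le_ciSup (Finite.bddAbove_range _) j0)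
  have hlF_eq : ∀ (r : ℝ) (z : Y), hlF Y π f r y z = (⨆ j, f z j) + (D z)^2 / (2*r) := by
    intro r z; rfl
  have hlF_lb : ∀ r > 0, ∀ z : Y, -R ≤ hlF Y π f r y z := by
    intro r hr z
    rw [hlF_eq]
    have : 0 ≤ (D z)^2 / (2*r) := by positivity
    have := hg_ge z
    linarith
  have hbdd : ∀ r > 0, BddBelow (range fun z : Y => hlF Y π f r y z) := by
    intro r hr
    exact ⟨-R, fun x ⟨z, hz⟩ => hz ▸ hlF_lb r hr z⟩
  have hiQ_le : ∀ r > 0, ∀ z : Y, iQ Y π f r y ≤ hlF Y π f r y z := by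
    intro r hr z
    exact ciInf_le (hbdd r hr) z
  -- existence of minimizing sequences
  have hmin_ex : ∀ r > 0, ∃ u : ℕ → Y, IsMinSeq Y π f r y u := by
    intro r hr
    have hch : ∀ n : ℕ, ∃ z : Y, hlF Y π f r y z < iQ Y π f r y + 1/(n+1) := by
      intro n
      apply exists_lt_of_ciInf_lt
      have : (0:ℝ) < 1/(n+1) := by positivity
      simp only [iQ]
      linarith
    choose u hu using hch
    refine ⟨u, ?_⟩
    have hupper : Tendsto (fun n : ℕ => iQ Y π f r y + 1/(n+1)) atTop (𝓝 (iQ Y π f r y)) := by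
      have := (tendsto_one_div_add_atTop_nhds_zero_nat : Tendsto (fun n : ℕ => 1 / ((n : ℝ) + 1)) atTop (𝓝 0))
      have := tendsto_const_nhds (x := iQ Y π f r y) (f := atTop (α := ℕ)) |>.add this
      simpa using this
    exact tendsto_of_tendsto_of_tendsto_of_le_of_le tendsto_const_nhds hupper
      (fun n => hiQ_le r hr (u n)) (fun n => (hu n).le)
  obtain ⟨u0, hu0⟩ := hmin_ex t ht
  obtain ⟨v0, hv0⟩ := hmin_ex s hs0
  -- key: any limsup for t is ≤ any liminf for s
  have key : ∀ (u v : ℕ → Y), IsMinSeq Y π f t y u → IsMinSeq Y π f s y v →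
      limsup (fun n => D (u n)) atTop ≤ liminf (fun n => D (v n)) atTop := by
    intro u v hu hv
    set c : ℝ := 1/(2*t) - 1/(2*s) with hc
    clear_value c
    have hcpos : 0 < c := by
      have h1 : 1/(2*s) < 1/(2*t) := by
        apply one_div_lt_one_div_of_lt <;> linarith
      simp only [hc]; linarith
    have hCa : IsCoboundedUnder (· ≤ ·) atTop (fun n => D (u n)) :=
      isCoboundedUnder_le_of_le atTop (fun n => hD0 (u n))
    have hCb : IsCoboundedUnder (· ≥ ·) atTop (fun n => D (v n)) :=
      isCoboundedUnder_ge_of_le atTop (fun n => hDle (v n))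
    have main : ∀ δ > (0:ℝ), limsup (fun n => D (u n)) atTop ≤ liminf (fun n => D (v n)) atTop + δ := by
      intro δ hδ
      set ε : ℝ := c * δ^2 / 2 with hε
      clear_value ε
      have hεpos : 0 < ε := by rw [hε]; positivity
      have h1 : ∀ᶠ n in atTop, hlF Y π f t y (u n) < iQ Y π f t y + ε :=
        hu.eventually_lt_const (by linarith)
      have h2 : ∀ᶠ m in atTop, hlF Y π f s y (v m) < iQ Y π f s y + ε :=
        hv.eventually_lt_const (by linarith)
      have cross : ∀ n m, hlF Y π f t y (u n) < iQ Y π f t y + ε →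
          hlF Y π f s y (v m) < iQ Y π f s y + ε → D (u n) ≤ D (v m) + δ := by
        intro n m hn hm
        have e1 : iQ Y π f t y ≤ hlF Y π f t y (v m) := hiQ_le t ht (v m)
        have e2 : iQ Y π f s y ≤ hlF Y π f s y (u n) := hiQ_le s hs0 (u n)
        rw [hlF_eq] at hn hm e1 e2
        have halg : (D (u n))^2 / (2*t) + (D (v m))^2 / (2*s)
            = (D (v m))^2 / (2*t) + (D (u n))^2 / (2*s) + c * ((D (u n))^2 - (D (v m))^2) := by
          simp only [hc]; field_simp; ring
        have hsq : (D (u n))^2 ≤ (D (v m))^2 + δ^2 := by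
          have h3 : c * ((D (u n))^2 - (D (v m))^2) ≤ 2 * ε := by nlinarith [hn, hm, e1, e2, halg]
          rw [hε] at h3
          nlinarith
        nlinarith [hD0 (u n), hD0 (v m)]
      have step : ∀ᶠ m in atTop, limsup (fun n => D (u n)) atTop - δ ≤ D (v m) := by
        filter_upwards [h2] with m hm
        have : limsup (fun n => D (u n)) atTop ≤ D (v m) + δ := by
          apply limsup_le_of_le hCa
          filter_upwards [h1] with n hn
          exact cross n m hn hm
        linarith
      have := le_liminf_of_le hCb step
      linarith
    by_contra hcon
    push_neg at hcon
    have := main ((limsup (fun n => D (u n)) atTop - liminf (fun n => D (v n)) atTop) / 2)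
      (by linarith)
    linarith
  -- conclude
  have hStne : (limsup (fun n => D (u0 n)) atTop) ∈
      { a : ℝ | ∃ u : ℕ → Y, IsMinSeq Y π f t y u ∧
        a = limsup (fun n => Metric.infDist (f (u n)) (π ⁻¹' {y})) atTop } :=
    ⟨u0, hu0, rfl⟩
  have hSsne : (liminf (fun n => D (v0 n)) atTop) ∈
      { a : ℝ | ∃ u : ℕ → Y, IsMinSeq Y π f s y u ∧
        a = liminf (fun n => Metric.infDist (f (u n)) (π ⁻¹' {y})) atTop } :=
    ⟨v0, hv0, rfl⟩
  apply csSup_le ⟨_, hStne⟩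
  rintro a ⟨u, hu, rfl⟩
  apply le_csInf ⟨_, hSsne⟩
  rintro b ⟨v, hv, rfl⟩
  exact key u v hu hv
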